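/- Consider binary classification with unprotected attribute X ∈ {U,V} and protected attribute A ∈ {R,B}, hypothesis class ℋ = {h_0, h_U} with h_0 ≡ 0 and h_U(X,A) = 1{X=U}, and define f(D) as the minimum empirical error over randomized classifiers Q ∈ Δ(ℋ) subject to |FP_R(Q) − FP_B(Q)| ≤ γ on dataset D. For γ > 1/m there exist neighboring datasets D, D' of size m (differing in one record) with |f(D) − f(D')| ≥ Ω(1/(γm)); concretely, for the dataset D with m/2 points (R,V,0), m/4 points (B,U,1), m(1−γ)/4 points (B,V,0), m γ/4 points (B,U,0), and D' obtained by changing one (B,V,0) record to (B,U,0), one has f(D) ≤ γ/4 and f(D') = γ/4 + 1/(4 + γm). -/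

import Mathlib

open Finset

namespace Stmt11

/-- A dataset over `(A, X, Y) ∈ {R,B} × {U,V} × {0,1}` given by counts;
`A = true` means `R`, `X = true` means `U`, `Y = true` means label `1`. -/
def Cnt := Bool × Bool × Bool → ℕ

/-- Total dataset size. -/
def total (cnt : Cnt) : ℕ := ∑ r : Bool × Bool × Bool, cnt r

/-- Probability that the mixture `α·h_U + (1−α)·h_0` predicts `1` on a point
with unprotected attribute `x` (`h_U(X,A) = 1{X = U}`, `h_0 ≡ 0`). -/
def predProb (α : ℝ) (x : Bool) : ℝ := if x then α else 0

/-- Empirical false positive rate on group `a` of the mixture with weight `α`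
on `h_U`. -/
noncomputable def FP (cnt : Cnt) (α : ℝ) (a : Bool) : ℝ :=
  (∑ x : Bool, (cnt (a, x, false) : ℝ) * predProb α x) /
    (∑ x : Bool, (cnt (a, x, false) : ℝ))

/-- Empirical error of the mixture with weight `α` on `h_U`. -/
noncomputable def err (cnt : Cnt) (α : ℝ) : ℝ :=
  (∑ r : Bool × Bool × Bool, (cnt r : ℝ) *
      (if r.2.2 then 1 - predProb α r.2.1 else predProb α r.2.1)) / total cnt

/-- Minimum empirical error over randomized classifiers in `Δ({h_0, h_U})`
subject to the false positive rate disparity constraint `|FP_R − FP_B| ≤ γ`. -/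
noncomputable def fOpt (cnt : Cnt) (γ : ℝ) : ℝ :=
  sInf { e : ℝ | ∃ α ∈ Set.Icc (0:ℝ) 1,
    |FP cnt α true - FP cnt α false| ≤ γ ∧ e = err cnt α }

/-- with `ℋ = {h_0, h_U}`, the fair-optimal error `f` has
sensitivity `Ω(1/(γm))`.  Concretely, for `m = 4k`, `γ = j/k > 1/m`, the
dataset `D` with `m/2` points `(R,V,0)`, `m/4` points `(B,U,1)`,
`m(1−γ)/4` points `(B,V,0)` and `mγ/4` points `(B,U,0)`, and `D'` obtained by
changing one `(B,V,0)` record into `(B,U,0)`, satisfy `f(D) ≤ γ/4`,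
`f(D') = γ/4 + 1/(4 + γm)`, and `|f(D) − f(D')| ≥ 1/(2γm)`. -/
theorem sensitivity_lower_bound (k j : ℕ) (hj : 1 ≤ j) (hjk : j < k)
    (γ : ℝ) (hγ : γ = (j : ℝ) / k) (m : ℕ) (hm : m = 4 * k)
    (hγm : 1 / (m : ℝ) < γ)
    (D D' : Cnt)
    (hD : D = fun r =>
      if r = (true, false, false) then 2 * k
      else if r = (false, true, true) then k
      else if r = (false, false, false) then k - j
      else if r = (false, true, false) then j
      else 0)
    (hD' : D' = fun r =>
      if r = (true, false, false) then 2 * k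
      else if r = (false, true, true) then k
      else if r = (false, false, false) then k - j - 1
      else if r = (false, true, false) then j + 1
      else 0) :
    fOpt D γ ≤ γ / 4 ∧
    fOpt D' γ = γ / 4 + 1 / (4 + γ * m) ∧
    1 / (2 * γ * m) ≤ |fOpt D γ - fOpt D' γ| := by
  have hkR : (0:ℝ) < k := by exact_mod_cast Nat.pos_of_ne_zero (by omega)
  have hjR : (1:ℝ) ≤ j := by exact_mod_cast hj
  have hjkR : (j:ℝ) < k := by exact_mod_cast hjk
  have hj1R : (j:ℝ) + 1 ≤ k := by
    have : (j:ℝ) + 1 ≤ k := by exact_mod_cast hjk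
    exact this
  -- err formulas
  have herrD : ∀ α : ℝ, err D α = ((k:ℝ) - ((k:ℝ) - j) * α) / (4 * k) := by
    intro α
    rw [hD]
    simp [err, total, predProb, Fintype.sum_prod_type, Fintype.sum_bool]
    rw [Nat.cast_sub hjk.le]
    have hk0 : (k:ℝ) ≠ 0 := hkR.ne'
    field_simp
    linear_combination ((α:ℝ) * j - k * α + k) * mul_inv_cancel₀ hk0
  have herrD' : ∀ α : ℝ, err D' α = ((k:ℝ) - ((k:ℝ) - j - 1) * α) / (4 * k) := by
    intro α
    rw [hD']
    simp [err, total, predProb, Fintype.sum_prod_type, Fintype.sum_bool]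
    rw [Nat.sub_sub, Nat.cast_sub (by omega : j + 1 ≤ k)]
    have : (k:ℕ) - (j+1) + (j+1) = k := by omega
    push_cast [this]
    have hk0 : (k:ℝ) ≠ 0 := hkR.ne'
    field_simp
    linear_combination ((α:ℝ) * j + α - k * α + k) * mul_inv_cancel₀ hk0
  -- FP formulas
  have hFPDt : ∀ α : ℝ, FP D α true = 0 := by
    intro α
    rw [hD]
    simp [FP, predProb, Fintype.sum_bool]
  have hFPDf : ∀ α : ℝ, FP D α false = (j:ℝ) * α / k := by
    intro α
    rw [hD]
    simp [FP, predProb, Fintype.sum_bool]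
    rw [Nat.cast_sub hjk.le]
    ring_nf
  have hFPD't : ∀ α : ℝ, FP D' α true = 0 := by
    intro α
    rw [hD']
    simp [FP, predProb, Fintype.sum_bool]
  have hFPD'f : ∀ α : ℝ, FP D' α false = ((j:ℝ) + 1) * α / k := by
    intro α
    rw [hD']
    simp [FP, predProb, Fintype.sum_bool]
    rw [Nat.sub_sub, Nat.cast_sub (by omega : j + 1 ≤ k)]
    push_cast
    rw [show (j:ℝ) + 1 + ((k:ℝ) - ((j:ℝ)+1)) = k by ring]
  -- fOpt D = γ/4
  have hlbD : ∀ e ∈ { e : ℝ | ∃ α ∈ Set.Icc (0:ℝ) 1,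
      |FP D α true - FP D α false| ≤ γ ∧ e = err D α }, γ / 4 ≤ e := by
    rintro e ⟨α, ⟨hα0, hα1⟩, -, rfl⟩
    rw [herrD, hγ, show (j:ℝ)/(k:ℝ)/4 = (j:ℝ)/(4*k) by ring,
      div_le_div_iff₀ (by positivity) (by positivity)]
    nlinarith [mul_le_mul_of_nonneg_left hα1 (by linarith : (0:ℝ) ≤ (k:ℝ) - j)]
  have hmemD : γ / 4 ∈ { e : ℝ | ∃ α ∈ Set.Icc (0:ℝ) 1,
      |FP D α true - FP D α false| ≤ γ ∧ e = err D α } := by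
    refine ⟨1, ⟨zero_le_one, le_refl 1⟩, ?_, ?_⟩
    · rw [hFPDt, hFPDf, zero_sub, abs_neg, abs_of_nonneg (by positivity), hγ]
      rw [mul_one]
    · rw [herrD, hγ, mul_one, sub_sub_cancel]
      ring
  have hfD : fOpt D γ = γ / 4 :=
    le_antisymm (csInf_le ⟨γ / 4, hlbD⟩ hmemD) (le_csInf ⟨_, hmemD⟩ hlbD)
  -- fOpt D' = v
  set v : ℝ := (j:ℝ) / (4 * k) + 1 / (4 * ((j:ℝ) + 1)) with hv
  have hlbD' : ∀ e ∈ { e : ℝ | ∃ α ∈ Set.Icc (0:ℝ) 1,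
      |FP D' α true - FP D' α false| ≤ γ ∧ e = err D' α }, v ≤ e := by
    rintro e ⟨α, ⟨hα0, hα1⟩, hcon, rfl⟩
    rw [hFPD't, hFPD'f, zero_sub, abs_neg, abs_of_nonneg (by positivity), hγ,
      div_le_div_iff₀ hkR hkR] at hcon
    have hαb : ((j:ℝ) + 1) * α ≤ j := by nlinarith
    rw [herrD', hv]
    rw [div_add_div _ _ (by positivity) (by positivity), div_le_div_iff₀ (by positivity) (by positivity)]
    nlinarith [mul_le_mul_of_nonneg_left hαb (by linarith : (0:ℝ) ≤ (k:ℝ) - j - 1)]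
  have hmemD' : v ∈ { e : ℝ | ∃ α ∈ Set.Icc (0:ℝ) 1,
      |FP D' α true - FP D' α false| ≤ γ ∧ e = err D' α } := by
    refine ⟨(j:ℝ) / (j + 1), ⟨by positivity, by rw [div_le_one (by positivity)]; linarith⟩, ?_, ?_⟩
    · rw [hFPD't, hFPD'f, zero_sub, abs_neg, abs_of_nonneg (by positivity), hγ]
      rw [show ((j:ℝ)+1) * ((j:ℝ)/((j:ℝ)+1)) / k = (j:ℝ)/k by
        field_simp]
    · rw [herrD', hv]
      field_simp
      ring
  have hfD' : fOpt D' γ = v :=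
    le_antisymm (csInf_le ⟨v, hlbD'⟩ hmemD') (le_csInf ⟨_, hmemD'⟩ hlbD')
  have hmR : (m:ℝ) = 4 * k := by rw [hm]; push_cast; ring
  have hγm4 : γ * m = 4 * j := by rw [hγ, hmR]; field_simp
  have hveq : v = γ / 4 + 1 / (4 + γ * m) := by
    rw [hγm4, hv, hγ]
    field_simp
    ring
  refine ⟨hfD.le, hfD'.trans hveq, ?_⟩
  rw [hfD, hfD', hveq]
  have h1 : γ / 4 - (γ / 4 + 1 / (4 + γ * m)) = -(1 / (4 + γ * m)) := by ring
  rw [h1, abs_neg, abs_of_nonneg (by rw [hγm4]; positivity), hγm4]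
  have h2 : 2 * γ * (m:ℝ) = 8 * j := by rw [hγ, hmR]; field_simp; ring
  rw [h2, div_le_div_iff₀ (by positivity) (by positivity)]
  linarith

end Stmt11
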